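/- Let k be an algebraically closed field of characteristic p > 0. Every polynomial f ∈ k[X] has a unique reduced representative red(f) ∈ k[X] modulo ℘(k[X]), where ℘(g) = g^p − g: that is, there is a unique polynomial red(f) lying in the k-span of monomials X^i with gcd(i,p)=1, such that f − red(f) ∈ ℘(k[X]). -/

import Mathlib

open Polynomial

section aux
variable {k : Type*} [Field k] [IsAlgClosed k] {p : ℕ} [Fact p.Prime] [CharP k p]

private lemma exists_AS (a : k) : ∃ b : k, b ^ p - b = a := by
  have hp : p.Prime := Fact.out
  have hdeg : ((X : k[X]) ^ p - (X + C a)).degree = (p : WithBot ℕ) := by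
    rw [degree_sub_eq_left_of_degree_lt, degree_X_pow]
    rw [degree_X_pow]
    calc (X + C a).degree ≤ 1 := by
          refine le_trans (degree_add_le _ _) ?_
          simp only [degree_X, max_le_iff]
          exact ⟨le_refl 1, degree_C_le.trans zero_le_one⟩
      _ < (p : WithBot ℕ) := by exact_mod_cast hp.one_lt
  obtain ⟨x, hx⟩ := IsAlgClosed.exists_root ((X : k[X]) ^ p - (X + C a)) (by
    rw [hdeg]; exact_mod_cast (Nat.cast_ne_zero (R := WithBot ℕ)).mpr hp.ne_zero)
  refine ⟨x, ?_⟩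
  have hx' : x ^ p - (x + a) = 0 := by simpa [IsRoot] using hx
  linear_combination hx' 

private lemma exists_red (n : ℕ) : ∀ a : k,
    ∃ r : Polynomial k, (∀ i, r.coeff i ≠ 0 → Nat.gcd i p = 1) ∧
      ∃ g : Polynomial k, (monomial n a : Polynomial k) - r = g ^ p - g := by
  induction n using Nat.strong_induction_on with
  | _ n ih =>
    intro a
    have hp : p.Prime := Fact.out
    haveI : CharP k[X] p := inferInstance
    haveI : ExpChar k[X] p := ExpChar.prime hp
    by_cases hdvd : p ∣ n
    · rcases Nat.eq_zero_or_pos n with hn | hn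
      · subst hn
        obtain ⟨b, hb⟩ := exists_AS (p := p) a
        refine ⟨0, by simp, C b, ?_⟩
        rw [monomial_zero_left, sub_zero, ← C_pow, ← C_sub, hb]
      · obtain ⟨m, rfl⟩ := hdvd
        have hm0 : 0 < m := Nat.pos_of_ne_zero (by rintro rfl; simp at hn)
        have hm : m < p * m := lt_mul_of_one_lt_left hm0 hp.one_lt
        obtain ⟨b, hb⟩ := IsAlgClosed.exists_pow_nat_eq a hp.pos
        obtain ⟨r, hr, g, hg⟩ := ih m hm b
        refine ⟨r, hr, monomial m b + g, ?_⟩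
        have h1 : (monomial m b : k[X]) ^ p = monomial (p * m) a := by
          rw [monomial_pow, mul_comm m p, hb]
        rw [add_pow_char, h1]
        linear_combination hg
    · refine ⟨monomial n a, ?_, 0, by simp [zero_pow hp.ne_zero]⟩
      intro i hi
      have : i = n := by
        by_contra hne
        exact hi (coeff_monomial_of_ne a hne)
      subst this
      exact Nat.Coprime.symm ((Nat.Prime.coprime_iff_not_dvd hp).mpr hdvd)

private lemma red_zero {w : k[X]}
    (h : ∀ i, (w ^ p - w).coeff i ≠ 0 → Nat.gcd i p = 1) : w ^ p - w = 0 := by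
  have hp : p.Prime := Fact.out
  by_contra hne
  rcases Nat.eq_zero_or_pos w.natDegree with hd | hd
  · have hw : w = C (w.coeff 0) := eq_C_of_natDegree_eq_zero hd
    have h0 : (w ^ p - w).coeff 0 ≠ 0 := by
      intro h0
      apply hne
      rw [hw, ← C_pow, ← C_sub] at h0 ⊢
      rw [coeff_C_zero] at h0
      rw [h0, map_zero]
    have := h 0 h0
    simp [Nat.gcd_zero_left] at this  -- gcd 0 p = p
    exact hp.one_lt.ne' this
  · have hw0 : w ≠ 0 := fun h0 => by simp [h0] at hd
    set d := w.natDegree with hdd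
    have hlt : d < p * d := lt_mul_of_one_lt_left hd hp.one_lt
    have hcoeff : (w ^ p - w).coeff (p * d) ≠ 0 := by
      rw [coeff_sub, coeff_eq_zero_of_natDegree_lt hlt, sub_zero]
      have : (w ^ p).natDegree = p * d := by rw [natDegree_pow]
      rw [← this, coeff_natDegree]
      rw [leadingCoeff_pow]
      exact pow_ne_zero _ (leadingCoeff_ne_zero.mpr hw0)
    have hgcd := h (p * d) hcoeff
    have : p ∣ Nat.gcd (p * d) p := Nat.dvd_gcd ⟨d, rfl⟩ dvd_rfl
    rw [hgcd] at this
    exact hp.one_lt.ne' (Nat.dvd_one.mp this)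
end aux

theorem stmt_3 {k : Type*} [Field k] [IsAlgClosed k] {p : ℕ} [Fact p.Prime] [CharP k p]
    (f : Polynomial k) :
    ∃! r : Polynomial k,
      (∀ i : ℕ, r.coeff i ≠ 0 → Nat.gcd i p = 1) ∧
        ∃ g : Polynomial k, f - r = g ^ p - g := by
  have hp : p.Prime := Fact.out
  haveI : CharP k[X] p := inferInstance
  haveI : ExpChar k[X] p := ExpChar.prime hp
  have hex : ∃ r : Polynomial k,
      (∀ i : ℕ, r.coeff i ≠ 0 → Nat.gcd i p = 1) ∧
        ∃ g : Polynomial k, f - r = g ^ p - g := by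
    induction f using Polynomial.induction_on' with
    | add f1 f2 h1 h2 =>
      obtain ⟨r1, hr1, g1, hg1⟩ := h1
      obtain ⟨r2, hr2, g2, hg2⟩ := h2
      refine ⟨r1 + r2, ?_, g1 + g2, ?_⟩
      · intro i hi
        rw [coeff_add] at hi
        rcases (by by_contra hc; push_neg at hc; simp [hc.1, hc.2] at hi :
            r1.coeff i ≠ 0 ∨ r2.coeff i ≠ 0) with h | h
        · exact hr1 i h
        · exact hr2 i h
      · rw [add_pow_char]
        linear_combination hg1 + hg2
    | monomial n a => exact exists_red n a
  obtain ⟨r, hr, g, hg⟩ := hex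
  refine ⟨r, ⟨hr, g, hg⟩, ?_⟩
  rintro s ⟨hs, h, hh⟩
  have key : s - r = (g - h) ^ p - (g - h) := by
    rw [sub_pow_char]
    linear_combination hg - hh
  have : (g - h) ^ p - (g - h) = 0 := by
    apply red_zero
    intro i hi
    rw [← key, coeff_sub] at hi
    rcases (by by_contra hc; push_neg at hc; simp [hc.1, hc.2] at hi :
        s.coeff i ≠ 0 ∨ r.coeff i ≠ 0) with h | h
    · exact hs i h
    · exact hr i h
  rw [← key] at this
  exact sub_eq_zero.mp this
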